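/- Let D be an algebra with a 𝕋ⁿ-action α and F an equivariant D-bimodule, with spectral subspaces F_m and D_m for m ∈ ℤⁿ. Suppose that for each m ∈ ℤⁿ there exist a₁,…,a_k ∈ D_m and b₁,…,b_k ∈ D_{−m} with Σᵢ bᵢaᵢ = 1, and F is the span of its spectral subspaces. Then the multiplication map F₀ ⊗_{D₀} D → F, e ⊗ a ↦ ea, is bijective. -/

import Mathlib

open MulOpposite

/-- Let `D` be an algebra with a `𝕋ⁿ`-action and `F` an equivariant
`D`-bimodule.  The action is encoded through its spectral (isotypical) decompositions:
gradings `𝒜 : ℤⁿ → Submodule ℤ D` and `ℬ : ℤⁿ → Submodule ℤ F` forming internal direct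
sums (`D` and `F` are the spans of their spectral subspaces, and these are independent),
with `1 ∈ 𝒜 0`, `𝒜_m·𝒜_k ⊆ 𝒜_{m+k}`, `𝒜_k·ℬ_m ⊆ ℬ_{m+k}` and `ℬ_m·𝒜_k ⊆ ℬ_{m+k}`.
Suppose that for each `m ∈ ℤⁿ` there exist `a₁,…,a_k ∈ D_m` and `b₁,…,b_k ∈ D_{−m}`
with `Σᵢ bᵢaᵢ = 1`.  Then the multiplication map `F₀ ⊗_{D₀} D → F`, `e ⊗ a ↦ ea`, is
bijective.  Here `T` with the `D₀`-balanced biadditive map `tmul : F₀ × D → T`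
satisfying the universal property plays the role of `F₀ ⊗_{D₀} D`, and `u` is the
induced multiplication map. -/
theorem spectral_multiplication_map_bijective
    {n : ℕ} {D F T : Type*} [Ring D]
    [AddCommGroup F] [Module D F] [Module Dᵐᵒᵖ F] [SMulCommClass D Dᵐᵒᵖ F]
    [AddCommGroup T]
    (𝒜 : (Fin n → ℤ) → Submodule ℤ D) (ℬ : (Fin n → ℤ) → Submodule ℤ F)
    (hDinternal : DirectSum.IsInternal 𝒜) (hFinternal : DirectSum.IsInternal ℬ)
    (hone : (1 : D) ∈ 𝒜 0)
    (hmul : ∀ (m k : Fin n → ℤ), ∀ a ∈ 𝒜 m, ∀ b ∈ 𝒜 k, a * b ∈ 𝒜 (m + k))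
    (hsmulL : ∀ (m k : Fin n → ℤ), ∀ d ∈ 𝒜 k, ∀ f ∈ ℬ m, d • f ∈ ℬ (m + k))
    (hsmulR : ∀ (m k : Fin n → ℤ), ∀ f ∈ ℬ m, ∀ d ∈ 𝒜 k, op d • f ∈ ℬ (m + k))
    (hpart : ∀ m : Fin n → ℤ, ∃ (k : ℕ) (a b : Fin k → D),
      (∀ i, a i ∈ 𝒜 m) ∧ (∀ i, b i ∈ 𝒜 (-m)) ∧ (∑ i, b i * a i) = 1)
    (tmul : ℬ 0 → D → T)
    (htl : ∀ (f f' : ℬ 0) (d : D), tmul (f + f') d = tmul f d + tmul f' d)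
    (htr : ∀ (f : ℬ 0) (d d' : D), tmul f (d + d') = tmul f d + tmul f d')
    (htbal : ∀ (f f' : ℬ 0) (z d : D), z ∈ 𝒜 0 → (f' : F) = op z • (f : F) →
      tmul f' d = tmul f (z * d))
    (huniv : ∀ (P : Type*) [AddCommGroup P] (φ : ℬ 0 → D → P),
      (∀ (f f' : ℬ 0) (d : D), φ (f + f') d = φ f d + φ f' d) →
      (∀ (f : ℬ 0) (d d' : D), φ f (d + d') = φ f d + φ f d') →
      (∀ (f f' : ℬ 0) (z d : D), z ∈ 𝒜 0 → (f' : F) = op z • (f : F) →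
        φ f' d = φ f (z * d)) →
      ∃! Φ : T →+ P, ∀ (f : ℬ 0) (d : D), Φ (tmul f d) = φ f d)
    (u : T →+ F)
    (hu : ∀ (f : ℬ 0) (d : D), u (tmul f d) = op d • (f : F)) :
    Function.Bijective u := by
  classical
  choose k a b ha hb hab using hpart
  -- tmul is zero in each argument when hitting zero
  have ht0l : ∀ d : D, tmul 0 d = 0 := by
    intro d
    have h := htl 0 0 d
    rw [add_zero] at h
    have h' : tmul 0 d + 0 = tmul 0 d + tmul 0 d := by rw [add_zero]; exact h
    exact (add_left_cancel h').symm
  -- tmul as an additive hom in second argument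
  let ψ : ℬ 0 → D →+ T := fun f => AddMonoidHom.mk' (tmul f) (htr f)
  -- key membership
  have hkey : ∀ (m : Fin n → ℤ) (i : Fin (k m)) (g : F), g ∈ ℬ m →
      op (b m i) • g ∈ ℬ 0 := by
    intro m i g hg
    have h := hsmulR m (-m) g hg (b m i) (hb m i)
    simpa using h
  -- the component maps
  let vm : ∀ m : Fin n → ℤ, ℬ m →+ T := fun m =>
    AddMonoidHom.mk'
      (fun g => ∑ i, tmul ⟨op (b m i) • (g : F), hkey m i g g.2⟩ (a m i))
      (by
        intro g g'
        rw [← Finset.sum_add_distrib]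
        refine Finset.sum_congr rfl fun i _ => ?_
        rw [← htl]
        congr 1
        apply Subtype.ext
        simp [smul_add])
  let w : (DirectSum _ (fun m => ℬ m)) →+ T := DirectSum.toAddMonoid vm
  set_option synthInstance.maxHeartbeats 1000000 in
  let e : (DirectSum (Fin n → ℤ) (fun m => ℬ m)) ≃+ F :=
    AddEquiv.ofBijective (DirectSum.coeAddMonoidHom ℬ) hFinternal
  have he : ∀ x, e x = DirectSum.coeAddMonoidHom ℬ x := fun x => rfl
  let v : F →+ T := w.comp e.symm.toAddMonoidHom
  have hv_mem : ∀ (m : Fin n → ℤ) (g : F) (hg : g ∈ ℬ m), v g = vm m ⟨g, hg⟩ := by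
    intro m g hg
    have hsymm : e.symm g = DirectSum.of (fun m => (ℬ m : Submodule ℤ F)) m ⟨g, hg⟩ := by
      rw [AddEquiv.symm_apply_eq, he]
      rw [DirectSum.coeAddMonoidHom_of]
    show w (e.symm g) = _
    rw [hsymm]
    exact DirectSum.toAddMonoid_of vm m ⟨g, hg⟩
  -- u ∘ v = id
  have huv : ∀ (m : Fin n → ℤ) (c : ℬ m), u (vm m c) = (c : F) := by
    intro m c
    have : u (vm m c) = ∑ i, op (b m i * a m i) • (c : F) := by
      show u (∑ i, tmul ⟨op (b m i) • (c : F), hkey m i c c.2⟩ (a m i)) = _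
      rw [map_sum]
      refine Finset.sum_congr rfl fun i _ => ?_
      rw [hu]
      show op (a m i) • op (b m i) • (c : F) = _
      rw [smul_smul, ← op_mul]
    rw [this]
    have : (∑ i, op (b m i * a m i) • (c : F)) = (∑ i, op (b m i * a m i)) • (c : F) := by
      rw [Finset.sum_smul]
    rw [this]
    have hsum : (∑ i, op (b m i * a m i)) = op (∑ i, b m i * a m i) :=
      (map_sum (opAddEquiv (α := D)) _ _).symm
    rw [hsum, hab, op_one, one_smul]
  have husurj : Function.Surjective u := by
    intro g
    refine ⟨v g, ?_⟩
    show u (w (e.symm g)) = g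
    have hw : u.comp w = DirectSum.coeAddMonoidHom ℬ := by
      refine DirectSum.addHom_ext fun m c => ?_
      simp only [AddMonoidHom.comp_apply]
      rw [show (DirectSum.of (fun m => (ℬ m : Submodule ℤ F)) m c) =
        DirectSum.of _ m c from rfl]
      rw [DirectSum.toAddMonoid_of, huv, DirectSum.coeAddMonoidHom_of]
    have := congrArg (fun φ : (DirectSum _ (fun m => ℬ m)) →+ F => φ (e.symm g)) hw
    simp only [AddMonoidHom.comp_apply] at this
    rw [this, ← he, AddEquiv.apply_symm_apply]
  -- v ∘ u = id
  have hvu : ∀ (f : ℬ 0) (d : D), v (op d • (f : F)) = tmul f d := by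
    intro f d
    have hd : d ∈ ⨆ m, 𝒜 m := by
      rw [hDinternal.submodule_iSup_eq_top]; trivial
    refine Submodule.iSup_induction (motive := fun d => v (op d • (f : F)) = tmul f d)
      𝒜 hd ?_ ?_ ?_
    · intro m d hdm
      have hmem : op d • (f : F) ∈ ℬ m := by
        have h := hsmulR 0 m (f : F) f.2 d hdm
        simpa using h
      rw [hv_mem m _ hmem]
      show (∑ i, tmul ⟨op (b m i) • (op d • (f : F)), _⟩ (a m i)) = tmul f d
      have hterm : ∀ i : Fin (k m),
          tmul ⟨op (b m i) • (op d • (f : F)), hkey m i _ hmem⟩ (a m i)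
            = tmul f (d * b m i * (a m i)) := by
        intro i
        have hz : d * b m i ∈ 𝒜 0 := by
          have h := hmul m (-m) d hdm (b m i) (hb m i)
          simpa using h
        refine htbal f _ (d * b m i) (a m i) hz ?_
        show op (b m i) • (op d • (f : F)) = op (d * b m i) • (f : F)
        rw [smul_smul, ← op_mul]
      calc (∑ i, tmul ⟨op (b m i) • (op d • (f : F)), hkey m i _ hmem⟩ (a m i))
          = ∑ i, tmul f (d * b m i * a m i) := Finset.sum_congr rfl fun i _ => hterm i
        _ = ψ f (∑ i, d * b m i * a m i) := (map_sum (ψ f) _ _).symm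
        _ = tmul f d := by
            simp only [mul_assoc, ← Finset.mul_sum, hab, mul_one]
            rfl
    · show v (op (0 : D) • (f : F)) = tmul f 0
      have h0 : tmul f 0 = 0 := by
        have h := htr f 0 0
        rw [add_zero] at h
        have h' : tmul f 0 + 0 = tmul f 0 + tmul f 0 := by rw [add_zero]; exact h
        exact (add_left_cancel h').symm
      rw [h0, op_zero, zero_smul, map_zero]
    · intro x y hx hy
      rw [op_add, add_smul, map_add, hx, hy, ← htr]
  -- injectivity via characters into AddCircle (1:ℚ), which lives in Type 0
  have hθ : ∀ t : T, v (u t) = t := by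
    intro t
    have hchar : ∀ c : CharacterModule T, c (v (u t)) = c t := by
      intro c
      let cc : T →+ AddCircle (1 : ℚ) := c
      let upc : T →+ ULift (AddCircle (1 : ℚ)) :=
        (AddEquiv.ulift.symm.toAddMonoidHom).comp cc
      obtain ⟨Φ, hΦ, hΦuniq⟩ := huniv (ULift (AddCircle (1 : ℚ)))
        (fun f d => upc (tmul f d))
        (fun f f' d => by
          show upc (tmul (f + f') d) = upc (tmul f d) + upc (tmul f' d)
          rw [htl, map_add])
        (fun f d d' => by
          show upc (tmul f (d + d')) = upc (tmul f d) + upc (tmul f d')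
          rw [htr, map_add])
        (fun f f' z d hz hf => by
          show upc (tmul f' d) = upc (tmul f (z * d))
          rw [htbal f f' z d hz hf])
      have h1 := hΦuniq (upc.comp (v.comp u)) (fun f d => by
        simp only [AddMonoidHom.comp_apply]
        rw [hu, hvu])
      have h2 := hΦuniq upc (fun f d => rfl)
      have h3 := h1.trans h2.symm
      have happ := congrArg (fun φ : T →+ ULift (AddCircle (1 : ℚ)) => (φ t).down) h3
      simp only [AddMonoidHom.comp_apply] at happ
      have : cc (v (u t)) = cc t := by
        simpa [upc] using happ
      exact this
    have hz : ∀ c : CharacterModule T, c (v (u t) - t) = 0 := fun c => by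
      rw [map_sub, hchar c, sub_self]
    have h0 := CharacterModule.eq_zero_of_character_apply hz
    exact sub_eq_zero.mp h0
  have hinj : Function.Injective u := fun x y hxy => by
    rw [← hθ x, ← hθ y, hxy]
  exact ⟨hinj, husurj⟩
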